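/- The multiplicity of p^{4t} = q^4 as a p-adic elementary divisor of A is exactly 1, i.e., e_{4t}(A) = 1. -/

import Mathlib

open Submodule LinearMap Module

section ComplEquiv

variable {F : Type*} [Field F] {V : Type*} [AddCommGroup V] [Module F V]

variable (U C : Submodule F V)

/-- The projection associated to `g`. -/
noncomputable def projOf (h : IsCompl U C) (g : C →ₗ[F] U) : V →ₗ[F] U :=
  U.projectionOnto C h + g ∘ₗ C.projectionOnto U h.symm

theorem projOf_eq_id (h : IsCompl U C) (g : C →ₗ[F] U) (x : U) :
    projOf U C h g x = x := by
  simp [projOf]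

theorem isCompl_ker_projOf (h : IsCompl U C) (g : C →ₗ[F] U) :
    IsCompl U (ker (projOf U C h g)) :=
  isCompl_of_proj (projOf_eq_id U C h g)

/-- Complements of `U` are parametrized by linear maps `C →ₗ U` for a fixed complement `C`. -/
noncomputable def complEquiv (h : IsCompl U C) :
    {X : Submodule F V // IsCompl U X} ≃ (C →ₗ[F] U) where
  toFun X := (U.projectionOnto X.1 X.2) ∘ₗ C.subtype
  invFun g := ⟨ker (projOf U C h g), isCompl_ker_projOf U C h g⟩
  left_inv := by
    rintro ⟨X, hX⟩
    have key : projOf U C h ((U.projectionOnto X hX) ∘ₗ C.subtype)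
        = U.projectionOnto X hX := by
      ext v
      have hv := Submodule.projection_add_projection_eq_self h v
      conv_rhs => rw [← hv]
      simp [projOf, Submodule.projection_apply_of_mem_left hX (Submodule.projection_apply_mem h v)]
    simp only [key, Submodule.linearProjOfIsCompl_ker]
  right_inv := by
    intro g
    ext c
    have hc : (c : V) - projOf U C h g c ∈ ker (projOf U C h g) := by
      rw [mem_ker, map_sub]
      have : projOf U C h g ((projOf U C h g c : V)) = projOf U C h g c :=
        projOf_eq_id U C h g _
      rw [this, sub_self]
    have hdec : (c : V) = (projOf U C h g c : V) + ((c : V) - projOf U C h g c) := by abel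
    have : (U.projectionOnto (ker (projOf U C h g)) (isCompl_ker_projOf U C h g))
        (c : V) = projOf U C h g c := by
      conv_lhs => rw [hdec]
      rw [map_add, Submodule.linearProjOfIsCompl_apply_left,
        Submodule.linearProjOfIsCompl_apply_right' _ hc, add_zero]
    simp only [projOf, LinearMap.add_apply, coe_comp, Function.comp_apply] at this
    simpa [projOf] using this

theorem mem_complEquiv_symm (h : IsCompl U C) (g : C →ₗ[F] U) (v : V) :
    v ∈ ((complEquiv U C h).symm g).1 ↔
      U.projectionOnto C h v + g (C.projectionOnto U h.symm v) = 0 := by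
  rfl

end ComplEquiv

section Eval

variable (F : Type*) [Field F] {M N : Type*} [AddCommGroup M] [Module F M]
  [AddCommGroup N] [Module F N]

theorem exists_linearMap_apply_eq {c0 : M} (hc0 : c0 ≠ 0) (u : N) :
    ∃ g : M →ₗ[F] N, g c0 = u := by
  have : ¬ ∀ φ : Module.Dual F M, φ c0 = 0 := by
    rw [Module.forall_dual_apply_eq_zero_iff]; exact hc0
  push_neg at this
  obtain ⟨φ, hφ⟩ := this
  refine ⟨φ.smulRight ((φ c0)⁻¹ • u), ?_⟩
  simp [smul_smul, mul_inv_cancel₀ hφ]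

theorem card_eval_mem {c0 : M} (hc0 : c0 ≠ 0) (T : Set N) :
    Nat.card {g : M →ₗ[F] N // g c0 ∈ T} * Nat.card N
      = Nat.card T * Nat.card (M →ₗ[F] N) := by
  classical
  choose sec hsec using fun u : N => exists_linearMap_apply_eq F hc0 u
  let e1 : {g : M →ₗ[F] N // g c0 ∈ T} ≃ T × {g : M →ₗ[F] N // g c0 = 0} :=
    { toFun := fun g => (⟨g.1 c0, g.2⟩, ⟨g.1 - sec (g.1 c0), by simp [hsec]⟩)
      invFun := fun x => ⟨x.2.1 + sec x.1, by simp [hsec, x.2.2, x.1.2]⟩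
      left_inv := fun g => by ext; simp
      right_inv := fun x => by
        ext <;> simp [hsec, x.2.2] }
  let e2 : (M →ₗ[F] N) ≃ N × {g : M →ₗ[F] N // g c0 = 0} :=
    { toFun := fun g => (g c0, ⟨g - sec (g c0), by simp [hsec]⟩)
      invFun := fun x => x.2.1 + sec x.1
      left_inv := fun g => by simp
      right_inv := fun x => by
        ext <;> simp [hsec, x.2.2] }
  rw [Nat.card_congr e1, Nat.card_congr e2, Nat.card_prod, Nat.card_prod]
  ring

end Eval

section Counting

variable {F : Type*} [Field F] [Fintype F] {V : Type*} [AddCommGroup V] [Module F V]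

theorem card_submodule [FiniteDimensional F V] (W : Submodule F V) :
    Nat.card W = Fintype.card F ^ finrank F W := by
  haveI : Finite V := Module.finite_of_finite F
  haveI : Fintype W := Fintype.ofFinite _
  rw [Nat.card_eq_fintype_card]
  exact card_eq_pow_finrank

theorem card_linearMap [FiniteDimensional F V] (W U : Submodule F V) :
    Nat.card (W →ₗ[F] U) = Fintype.card F ^ (finrank F W * finrank F U) := by
  let b := Module.finBasis F W
  rw [← Nat.card_congr (b.constr F (M' := U)).toEquiv, Nat.card_fun, card_submodule U,
    Nat.card_eq_fintype_card, Fintype.card_fin, ← pow_mul, mul_comm (finrank F U)]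

theorem skew_iff_isCompl (hV : finrank F V = 4) {U X : Submodule F V}
    (hU : finrank F U = 2) (hX : finrank F X = 2) :
    U ⊓ X = ⊥ ↔ IsCompl U X := by
  haveI : FiniteDimensional F V := FiniteDimensional.of_finrank_pos (by omega)
  constructor
  · intro h
    refine ⟨disjoint_iff.2 h, codisjoint_iff.2 ?_⟩
    apply Submodule.eq_top_of_finrank_eq
    have := Submodule.finrank_sup_add_finrank_inf_eq U X
    rw [h, finrank_bot, hU, hX] at this
    rw [hV]
    omega
  · intro h
    exact disjoint_iff.1 h.disjoint

theorem card_isCompl [FiniteDimensional F V] (hV : finrank F V = 4) (U : Submodule F V)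
    (hU : finrank F U = 2) :
    Nat.card {X : Submodule F V // IsCompl U X} = Fintype.card F ^ 4 := by
  obtain ⟨C, hC⟩ := Submodule.exists_isCompl U
  have hCr : finrank F C = 2 := by
    have := Submodule.finrank_add_eq_of_isCompl hC
    rw [hU, hV] at this; omega
  rw [Nat.card_congr (complEquiv U C hC), card_linearMap, hCr, hU]

theorem constr_injective_iff {k : ℕ} {W U : Submodule F V} (b : Basis (Fin k) F W)
    (s : Fin k → U) :
    Function.Injective (b.constr F s) ↔ LinearIndependent F s := by
  constructor
  · intro hinj
    rw [Fintype.linearIndependent_iff]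
    intro c hc i
    have hx : (b.constr F s) (∑ i, c i • b i) = 0 := by
      rw [map_sum]
      simpa [Basis.constr_basis] using hc
    have h0 : (b.constr F s) 0 = 0 := map_zero _
    have := hinj (hx.trans h0.symm)
    exact (Fintype.linearIndependent_iff.1 b.linearIndependent) c this i
  · intro hLI
    rw [← LinearMap.ker_eq_bot]
    rw [eq_bot_iff]
    intro x hx
    rw [LinearMap.mem_ker] at hx
    have hrep := b.sum_repr x
    rw [← hrep, map_sum] at hx
    simp only [map_smul, Basis.constr_basis] at hx
    have := (Fintype.linearIndependent_iff.1 hLI) _ hx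
    rw [Submodule.mem_bot, ← hrep]
    simp only [this, zero_smul, Finset.sum_const_zero]

theorem card_injective {W U : Submodule F V} (hW : finrank F W = 2) (hU : finrank F U = 2) :
    Nat.card {g : W →ₗ[F] U // Function.Injective g}
      = (Fintype.card F ^ 2 - 1) * (Fintype.card F ^ 2 - Fintype.card F) := by
  haveI : FiniteDimensional F W := FiniteDimensional.of_finrank_pos (by omega)
  haveI : FiniteDimensional F U := FiniteDimensional.of_finrank_pos (by omega)
  haveI : Finite U := Module.finite_of_finite F
  let b : Basis (Fin 2) F W := Module.finBasisOfFinrankEq F W hW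
  let e : {s : Fin 2 → U // LinearIndependent F s} ≃ {g : W →ₗ[F] U // Function.Injective g} :=
    Equiv.subtypeEquiv (b.constr F (M' := U)).toEquiv
      (fun s => (constr_injective_iff b s).symm)
  rw [← Nat.card_congr e, card_linearIndependent (by omega), hU]
  rw [Fin.prod_univ_two]
  simp

theorem card_bothSkew_of_skew [FiniteDimensional F V] (hV : finrank F V = 4)
    {U W : Submodule F V} (hU : finrank F U = 2) (hW : finrank F W = 2) (hUW : U ⊓ W = ⊥) :
    Nat.card {X : Submodule F V // IsCompl U X ∧ X ⊓ W = ⊥}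
      = (Fintype.card F ^ 2 - 1) * (Fintype.card F ^ 2 - Fintype.card F) := by
  have h : IsCompl U W := (skew_iff_isCompl hV hU hW).1 hUW
  have hiff : ∀ X : {X : Submodule F V // IsCompl U X},
      X.1 ⊓ W = ⊥ ↔ Function.Injective (complEquiv U W h X) := by
    intro X
    constructor
    · intro hXW
      rw [← LinearMap.ker_eq_bot, eq_bot_iff]
      intro w hw
      rw [LinearMap.mem_ker] at hw
      have hw' : U.projectionOnto X.1 X.2 (w : V) = 0 := hw
      rw [Submodule.linearProjOfIsCompl_apply_eq_zero_iff] at hw'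
      have hmem : (w : V) ∈ X.1 ⊓ W := Submodule.mem_inf.2 ⟨hw', w.2⟩
      rw [hXW, Submodule.mem_bot] at hmem
      simpa [Submodule.mem_bot] using Subtype.ext hmem
    · intro hinj
      rw [eq_bot_iff]
      intro v hv
      obtain ⟨hvX, hvW⟩ := Submodule.mem_inf.1 hv
      have h0 : (complEquiv U W h X) ⟨v, hvW⟩ = 0 := by
        have : U.projectionOnto X.1 X.2 v = 0 :=
          (Submodule.linearProjOfIsCompl_apply_eq_zero_iff X.2).2 hvX
        exact this
      have := hinj (h0.trans (map_zero _).symm)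
      simpa [Submodule.mem_bot] using congrArg Subtype.val this
  have e : {X : Submodule F V // IsCompl U X ∧ X ⊓ W = ⊥}
      ≃ {g : W →ₗ[F] U // Function.Injective g} :=
    (Equiv.subtypeSubtypeEquivSubtypeInter _ _).symm.trans
      ((complEquiv U W h).subtypeEquiv hiff)
  rw [Nat.card_congr e, card_injective hW hU]

theorem exists_isCompl_of_disjoint {U S : Submodule F V} (h : Disjoint U S) :
    ∃ C, S ≤ C ∧ IsCompl U C := by
  obtain ⟨E, hE⟩ := Submodule.exists_isCompl (U ⊔ S)
  refine ⟨S ⊔ E, le_sup_left, ?_, ?_⟩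
  · rw [disjoint_iff, eq_bot_iff]
    intro x hx
    obtain ⟨hxU, hxSE⟩ := Submodule.mem_inf.1 hx
    obtain ⟨s, hs, e, he, hse⟩ := Submodule.mem_sup.1 hxSE
    have heUS : e ∈ U ⊔ S := by
      have : e = x - s := by rw [← hse]; abel
      rw [this]
      exact sub_mem (Submodule.mem_sup_left hxU) (Submodule.mem_sup_right hs)
    have he0 : e = 0 := by
      have := Submodule.disjoint_def.1 hE.disjoint e heUS he
      exact this
    have hxs : x = s := by rw [← hse, he0, add_zero]
    have : x = 0 := Submodule.disjoint_def.1 h x hxU (hxs ▸ hs)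
    simpa [Submodule.mem_bot] using this
  · rw [codisjoint_iff, ← sup_assoc]
    exact codisjoint_iff.1 hE.codisjoint

theorem card_bothSkew_of_meet [FiniteDimensional F V] (hV : finrank F V = 4)
    {U W : Submodule F V} (hU : finrank F U = 2) (hW : finrank F W = 2)
    (hne : U ≠ W) (hmeet : U ⊓ W ≠ ⊥) :
    Nat.card {X : Submodule F V // IsCompl U X ∧ X ⊓ W = ⊥} + Fintype.card F ^ 3
      = Fintype.card F ^ 4 := by
  classical
  haveI : Finite V := Module.finite_of_finite F
  have hZU : U ⊓ W ≠ U := by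
    intro hh
    have hle : U ≤ W := by rw [← hh]; exact inf_le_right
    exact hne (Submodule.eq_of_le_of_finrank_eq hle (hU.trans hW.symm))
  have h1 : finrank F (U ⊓ W : Submodule F V) = 1 := by
    have hle2 : finrank F (U ⊓ W : Submodule F V) ≤ 2 := hU ▸ Submodule.finrank_mono inf_le_left
    have hpos : finrank F (U ⊓ W : Submodule F V) ≠ 0 := by
      intro hh
      exact hmeet (Submodule.finrank_eq_zero.1 hh)
    have hne2 : finrank F (U ⊓ W : Submodule F V) ≠ 2 := by
      intro hh
      exact hZU (Submodule.eq_of_le_of_finrank_eq inf_le_left (by rw [hh, hU]))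
    omega
  have hWU : ¬ W ≤ U := by
    intro hle
    exact hne (Submodule.eq_of_le_of_finrank_eq hle (hW.trans hU.symm)).symm
  obtain ⟨w0, hw0W, hw0U⟩ := SetLike.not_le_iff_exists.1 hWU
  have hw00 : w0 ≠ 0 := fun h0 => hw0U (h0 ▸ U.zero_mem)
  have hdisj : Disjoint U (Submodule.span F {w0}) :=
    (Submodule.disjoint_span_singleton' hw00).2 hw0U
  obtain ⟨C, hSC, hC⟩ := exists_isCompl_of_disjoint hdisj
  have hw0C : w0 ∈ C := hSC (Submodule.mem_span_singleton_self w0)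
  have hCr : finrank F C = 2 := by
    have := Submodule.finrank_add_eq_of_isCompl hC
    rw [hU, hV] at this; omega
  set c0 : C := ⟨w0, hw0C⟩ with hc0def
  have hc00 : c0 ≠ 0 := fun h => hw00 (congrArg Subtype.val h)
  have hw0Z : w0 ∉ (U ⊓ W : Submodule F V) := fun hh => hw0U (Submodule.mem_inf.1 hh).1
  have hWeq : (U ⊓ W) ⊔ Submodule.span F {w0} = W := by
    apply Submodule.eq_of_le_of_finrank_eq
    · exact sup_le inf_le_right ((Submodule.span_le).2 (by simpa using hw0W))
    · have hd : Disjoint (U ⊓ W) (Submodule.span F {w0}) :=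
        (Submodule.disjoint_span_singleton' hw00).2 hw0Z
      have := Submodule.finrank_sup_add_finrank_inf_eq (U ⊓ W) (Submodule.span F {w0})
      rw [disjoint_iff.1 hd, finrank_bot, h1, finrank_span_singleton hw00] at this
      rw [hW]
      omega
  have hchar : ∀ g : C →ₗ[F] U,
      (((complEquiv U C hC).symm g).1 ⊓ W = ⊥) ↔ ((g c0 : V) ∉ W) := by
    intro g
    constructor
    · intro hbot hgc
      have hvX : w0 - (g c0 : V) ∈ ((complEquiv U C hC).symm g).1 := by
        rw [mem_complEquiv_symm]
        have e1 : U.projectionOnto C hC w0 = 0 :=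
          Submodule.linearProjOfIsCompl_apply_right' hC hw0C
        have e2 : U.projectionOnto C hC (g c0 : V) = g c0 :=
          Submodule.linearProjOfIsCompl_apply_left hC (g c0)
        have e3 : C.projectionOnto U hC.symm w0 = c0 :=
          Submodule.linearProjOfIsCompl_apply_left hC.symm ⟨w0, hw0C⟩
        have e4 : C.projectionOnto U hC.symm (g c0 : V) = 0 :=
          Submodule.linearProjOfIsCompl_apply_right' hC.symm (g c0).2
        rw [map_sub, map_sub, e1, e2, e3, e4, sub_zero]
        simp
      have hvW : w0 - (g c0 : V) ∈ W := sub_mem hw0W hgc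
      have hv0 : w0 - (g c0 : V) ≠ 0 := by
        intro hh
        rw [sub_eq_zero] at hh
        exact hw0U (hh ▸ (g c0).2)
      apply hv0
      have : w0 - (g c0 : V) ∈ (((complEquiv U C hC).symm g).1 ⊓ W) :=
        Submodule.mem_inf.2 ⟨hvX, hvW⟩
      rw [hbot, Submodule.mem_bot] at this
      exact this
    · intro hgc
      rw [eq_bot_iff]
      intro v hv
      obtain ⟨hvX, hvW⟩ := Submodule.mem_inf.1 hv
      rw [← hWeq] at hvW
      obtain ⟨z, hz, y, hy, rfl⟩ := Submodule.mem_sup.1 hvW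
      obtain ⟨a, rfl⟩ := Submodule.mem_span_singleton.1 hy
      have hzU : z ∈ U := (Submodule.mem_inf.1 hz).1
      have hzW : z ∈ W := (Submodule.mem_inf.1 hz).2
      rw [mem_complEquiv_symm] at hvX
      have e1 : U.projectionOnto C hC z = ⟨z, hzU⟩ :=
        Submodule.linearProjOfIsCompl_apply_left hC ⟨z, hzU⟩
      have e2 : U.projectionOnto C hC w0 = 0 :=
        Submodule.linearProjOfIsCompl_apply_right' hC hw0C
      have e3 : C.projectionOnto U hC.symm z = 0 :=
        Submodule.linearProjOfIsCompl_apply_right' hC.symm hzU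
      have e4 : C.projectionOnto U hC.symm w0 = c0 :=
        Submodule.linearProjOfIsCompl_apply_left hC.symm ⟨w0, hw0C⟩
      rw [map_add, map_smul, map_add, map_smul, e1, e2, e3, e4, smul_zero, add_zero,
        zero_add, map_smul] at hvX
      by_cases ha : a = 0
      · subst ha
        simp only [zero_smul, add_zero] at hvX ⊢
        have : z = 0 := by
          have := congrArg (fun u : U => (u : V)) hvX
          simpa using this
        simp [this]
      · exfalso
        apply hgc
        have : a • (g c0) = - (⟨z, hzU⟩ : U) := by
          rw [add_comm] at hvX
          exact eq_neg_of_add_eq_zero_left hvX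
        have hcoe : a • (g c0 : V) = -z := by
          have := congrArg (fun u : U => (u : V)) this
          simpa using this
        have : (g c0 : V) = a⁻¹ • (-z) := by
          rw [← hcoe, smul_smul, inv_mul_cancel₀ ha, one_smul]
        rw [this]
        exact Submodule.smul_mem _ _ (neg_mem hzW)
  -- counting
  haveI : Finite (C →ₗ[F] U) :=
    Finite.of_injective (fun g => (g : C → U)) DFunLike.coe_injective
  have key := card_eval_mem F hc00 {u : U | (u : V) ∈ W}
  have hT : Nat.card {u : U // (u : V) ∈ W} = Fintype.card F := by
    have e : {u : U // (u : V) ∈ W} ≃ (U ⊓ W : Submodule F V) :=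
      { toFun := fun u => ⟨u.1, Submodule.mem_inf.2 ⟨u.1.2, u.2⟩⟩
        invFun := fun z => ⟨⟨z.1, (Submodule.mem_inf.1 z.2).1⟩, (Submodule.mem_inf.1 z.2).2⟩
        left_inv := fun u => rfl
        right_inv := fun z => rfl }
    rw [Nat.card_congr e, card_submodule, h1, pow_one]
  have hUcard : Nat.card U = Fintype.card F ^ 2 := by rw [card_submodule, hU]
  have hHom : Nat.card (C →ₗ[F] U) = Fintype.card F ^ 4 := by
    rw [card_linearMap, hCr, hU]
  have hqpos : 0 < Fintype.card F := Fintype.card_pos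
  have hmemcard : Nat.card {g : C →ₗ[F] U // (g c0 : V) ∈ W} = Fintype.card F ^ 3 := by
    have hkey2 : Nat.card {g : C →ₗ[F] U // (g c0 : V) ∈ W} * Fintype.card F ^ 2
        = Fintype.card F ^ 3 * Fintype.card F ^ 2 := by
      have : Nat.card {g : C →ₗ[F] U // g c0 ∈ {u : U | (u : V) ∈ W}}
          = Nat.card {g : C →ₗ[F] U // (g c0 : V) ∈ W} := rfl
      rw [← this]
      calc Nat.card {g : C →ₗ[F] U // g c0 ∈ {u : U | (u : V) ∈ W}} * Fintype.card F ^ 2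
          = Nat.card {g : C →ₗ[F] U // g c0 ∈ {u : U | (u : V) ∈ W}} * Nat.card U := by
            rw [hUcard]
        _ = Nat.card {u : U | (u : V) ∈ W} * Nat.card (C →ₗ[F] U) := key
        _ = Fintype.card F * Fintype.card F ^ 4 := by
            rw [hHom, show Nat.card {u : U | (u : V) ∈ W} = Fintype.card F from hT]
        _ = Fintype.card F ^ 3 * Fintype.card F ^ 2 := by ring
    exact Nat.eq_of_mul_eq_mul_right (by positivity) hkey2
  have hsplit : Nat.card {g : C →ₗ[F] U // (g c0 : V) ∈ W}
      + Nat.card {g : C →ₗ[F] U // ¬ (g c0 : V) ∈ W} = Nat.card (C →ₗ[F] U) := by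
    rw [← Nat.card_sum]
    exact Nat.card_congr (Equiv.sumCompl _)
  have hXg : Nat.card {X : Submodule F V // IsCompl U X ∧ X ⊓ W = ⊥}
      = Nat.card {g : C →ₗ[F] U // ¬ (g c0 : V) ∈ W} := by
    apply Nat.card_congr
    refine (Equiv.subtypeSubtypeEquivSubtypeInter _ _).symm.trans ?_
    refine (complEquiv U C hC).subtypeEquiv ?_
    intro X
    have := hchar ((complEquiv U C hC) X)
    rwa [Equiv.symm_apply_apply] at this
  rw [hXg]
  rw [hmemcard, hHom] at hsplit
  omega

end Counting

theorem sum_boole_nat_card {α : Type*} [Fintype α] (P : α → Prop) [DecidablePred P]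
    {R : Type*} [CommRing R] :
    (∑ x : α, if P x then (1 : R) else 0) = (Nat.card {x // P x} : R) := by
  rw [Finset.sum_boole, Nat.card_eq_fintype_card, Fintype.card_subtype]

open Matrix

/-- The set of `k`-dimensional subspaces of `V`. -/
abbrev LGr (F V : Type*) [Field F] [AddCommGroup V] [Module F V] (k : ℕ) :=
  {W : Submodule F V // Module.finrank F W = k}

/-- **Theorem A(5).** The multiplicity of `p^{4t} = q^4` as a `p`-adic elementary divisor of
the skew-lines incidence matrix `A` of `PG(3,q)`, `q = p^t`, is exactly `1`. -/
theorem elemDiv_top (p t : ℕ) [Fact p.Prime] (ht : 1 ≤ t)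
    (F : Type*) [Field F] [Fintype F] (hF : Fintype.card F = p ^ t)
    (V : Type*) [AddCommGroup V] [Module F V] (hV : Module.finrank F V = 4)
    [DecidableEq (Submodule F V)] [Fintype (LGr F V 2)]
    (A : Matrix (LGr F V 2) (LGr F V 2) ℤ_[p])
    (hA : ∀ U W : LGr F V 2, A U W = if U.1 ⊓ W.1 = ⊥ then 1 else 0)
    (P Q : Matrix (LGr F V 2) (LGr F V 2) ℤ_[p]) (d : LGr F V 2 → ℤ_[p])
    (hP : IsUnit P.det) (hQ : IsUnit Q.det) (hPQ : P * A * Q = Matrix.diagonal d)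
    :
    Nat.card {j : LGr F V 2 // Associated ((p : ℤ_[p]) ^ (4 * t)) (d j)} = 1 := by
  classical
  haveI : FiniteDimensional F V := FiniteDimensional.of_finrank_pos (by rw [hV]; norm_num)
  set π : ℤ_[p] := (p : ℤ_[p]) with hπdef
  have hπprime : Prime π := PadicInt.prime_p
  have hπ0 : π ≠ 0 := hπprime.ne_zero
  have hcast : ∀ k : ℕ, ((Fintype.card F ^ k : ℕ) : ℤ_[p]) = π ^ (k * t) := by
    intro k
    rw [hF, ← pow_mul]
    push_cast
    rw [mul_comm t k]
  have hcast' : ((Fintype.card F : ℕ) : ℤ_[p]) = π ^ t := by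
    simpa using hcast 1
  -- transfer of counting results to `LGr`
  have hcount1 : ∀ U : LGr F V 2,
      Nat.card {X : LGr F V 2 // U.1 ⊓ X.1 = ⊥} = Fintype.card F ^ 4 := by
    intro U
    have e : {X : LGr F V 2 // U.1 ⊓ X.1 = ⊥} ≃ {X : Submodule F V // IsCompl U.1 X} :=
      { toFun := fun X => ⟨X.1.1, (skew_iff_isCompl hV U.2 X.1.2).1 X.2⟩
        invFun := fun X => ⟨⟨X.1, by
            have := Submodule.finrank_add_eq_of_isCompl X.2
            rw [U.2, hV] at this; omega⟩, disjoint_iff.1 X.2.disjoint⟩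
        left_inv := fun X => rfl
        right_inv := fun X => rfl }
    rw [Nat.card_congr e, card_isCompl hV U.1 U.2]
  have hcount2 : ∀ U W : LGr F V 2,
      Nat.card {X : LGr F V 2 // U.1 ⊓ X.1 = ⊥ ∧ X.1 ⊓ W.1 = ⊥}
        = Nat.card {X : Submodule F V // IsCompl U.1 X ∧ X ⊓ W.1 = ⊥} := by
    intro U W
    apply Nat.card_congr
    exact
      { toFun := fun X => ⟨X.1.1, ⟨(skew_iff_isCompl hV U.2 X.1.2).1 X.2.1, X.2.2⟩⟩
        invFun := fun X => ⟨⟨X.1, by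
            have := Submodule.finrank_add_eq_of_isCompl X.2.1
            rw [U.2, hV] at this; omega⟩, ⟨disjoint_iff.1 X.2.1.disjoint, X.2.2⟩⟩
        left_inv := fun X => rfl
        right_inv := fun X => rfl }
  -- row sums
  have hrow : ∀ U : LGr F V 2, ∑ W : LGr F V 2, A U W = π ^ (4 * t) := by
    intro U
    calc ∑ W : LGr F V 2, A U W = ∑ W : LGr F V 2, if U.1 ⊓ W.1 = ⊥ then (1 : ℤ_[p]) else 0 :=
          Finset.sum_congr rfl fun W _ => hA U W
      _ = (Nat.card {W : LGr F V 2 // U.1 ⊓ W.1 = ⊥} : ℤ_[p]) := sum_boole_nat_card _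
      _ = π ^ (4 * t) := by rw [hcount1 U]; exact hcast 4
  have hsym : ∀ U W : LGr F V 2, A U W = A W U := fun U W => by
    rw [hA, hA, inf_comm]
  -- the quadratic identity
  have hA2 : ∀ U W : LGr F V 2, ∑ X : LGr F V 2, A U X * A X W
      = (if U = W then π ^ (3 * t) else 0) + (π ^ t - π ^ (2 * t)) * A U W
        + (π ^ (4 * t) - π ^ (3 * t)) := by
    intro U W
    have hprod : ∀ X : LGr F V 2, A U X * A X W
        = if (U.1 ⊓ X.1 = ⊥ ∧ X.1 ⊓ W.1 = ⊥) then (1 : ℤ_[p]) else 0 := by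
      intro X
      rw [hA, hA]
      by_cases h1 : U.1 ⊓ X.1 = ⊥ <;> by_cases h2 : X.1 ⊓ W.1 = ⊥ <;> simp [h1, h2]
    have hsum : ∑ X : LGr F V 2, A U X * A X W
        = (Nat.card {X : LGr F V 2 // U.1 ⊓ X.1 = ⊥ ∧ X.1 ⊓ W.1 = ⊥} : ℤ_[p]) := by
      rw [Finset.sum_congr rfl fun X _ => hprod X]
      exact sum_boole_nat_card _
    rw [hsum, hcount2 U W]
    by_cases hUW : U = W
    · subst hUW
      have e : {X : Submodule F V // IsCompl U.1 X ∧ X ⊓ U.1 = ⊥}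
          ≃ {X : Submodule F V // IsCompl U.1 X} :=
        Equiv.subtypeEquivRight fun X =>
          ⟨fun h => h.1, fun h => ⟨h, disjoint_iff.1 h.disjoint.symm⟩⟩
      rw [Nat.card_congr e, card_isCompl hV U.1 U.2, hcast 4]
      have hU0 : U.1 ≠ ⊥ := by
        intro h
        have h2 := U.2
        rw [h, finrank_bot] at h2
        omega
      have hAUU : A U U = 0 := by rw [hA, inf_idem, if_neg hU0]
      rw [hAUU, if_pos rfl]
      ring
    · have hne1 : U.1 ≠ W.1 := fun h => hUW (Subtype.ext h)
      by_cases hskew : U.1 ⊓ W.1 = ⊥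
      · rw [card_bothSkew_of_skew hV U.2 W.2 hskew]
        have hAUW : A U W = 1 := by rw [hA, if_pos hskew]
        rw [hAUW, if_neg hUW]
        have h1le : 1 ≤ Fintype.card F ^ 2 := Nat.one_le_pow _ _ Fintype.card_pos
        have hqle : Fintype.card F ≤ Fintype.card F ^ 2 :=
          Nat.le_self_pow (by norm_num) _
        rw [Nat.cast_mul, Nat.cast_sub h1le, Nat.cast_sub hqle, Nat.cast_one, hcast 2, hcast']
        ring
      · have hmeet := card_bothSkew_of_meet hV U.2 W.2 hne1 hskew
        have hceq : (Nat.card {X : Submodule F V // IsCompl U.1 X ∧ X ⊓ W.1 = ⊥} : ℤ_[p])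
            = π ^ (4 * t) - π ^ (3 * t) := by
          have hc := congrArg (fun n : ℕ => (n : ℤ_[p])) hmeet
          simp only [Nat.cast_add] at hc
          rw [hcast 3, hcast 4] at hc
          exact eq_sub_of_add_eq hc
        have hAUW : A U W = 0 := by rw [hA, if_neg hskew]
        rw [hceq, hAUW, if_neg hUW]
        ring
  -- kernel lemma
  have hker : ∀ k : ℕ, 3 * t ≤ k → ∀ x : LGr F V 2 → ℤ_[p],
      (∀ i, π ^ k ∣ A.mulVec x i) →
      ∀ i, π ^ (k - 3 * t) ∣ (x i + (π ^ t - 1) * ∑ j, x j) := by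
    intro k hk x hx i
    set y := A.mulVec x with hy
    have hyi : ∀ j, y j = ∑ l, A j l * x l := fun j => by
      simp [hy, Matrix.mulVec, dotProduct]
    have hexp : A.mulVec y i = ∑ l, (∑ j, A i j * A j l) * x l := by
      calc A.mulVec y i = ∑ j, A i j * y j := by
            simp [Matrix.mulVec, dotProduct]
        _ = ∑ j, A i j * ∑ l, A j l * x l :=
            Finset.sum_congr rfl fun j _ => by rw [hyi j]
        _ = ∑ j, ∑ l, A i j * (A j l * x l) := by
            refine Finset.sum_congr rfl fun j _ => ?_
            rw [Finset.mul_sum]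
        _ = ∑ l, ∑ j, A i j * (A j l * x l) := Finset.sum_comm
        _ = ∑ l, (∑ j, A i j * A j l) * x l := by
            refine Finset.sum_congr rfl fun l _ => ?_
            rw [Finset.sum_mul]
            exact Finset.sum_congr rfl fun j _ => (mul_assoc _ _ _).symm
    have hexp2 : A.mulVec y i = π ^ (3 * t) * x i + (π ^ t - π ^ (2 * t)) * y i
        + (π ^ (4 * t) - π ^ (3 * t)) * ∑ l, x l := by
      rw [hexp]
      calc ∑ l, (∑ j, A i j * A j l) * x l
          = ∑ l, (((if i = l then π ^ (3 * t) else 0) + (π ^ t - π ^ (2 * t)) * A i l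
              + (π ^ (4 * t) - π ^ (3 * t))) * x l) :=
            Finset.sum_congr rfl fun l _ => by rw [hA2 i l]
        _ = (∑ l, (if i = l then π ^ (3 * t) else 0) * x l)
            + (∑ l, (π ^ t - π ^ (2 * t)) * (A i l * x l))
            + (∑ l, (π ^ (4 * t) - π ^ (3 * t)) * x l) := by
            rw [← Finset.sum_add_distrib, ← Finset.sum_add_distrib]
            exact Finset.sum_congr rfl fun l _ => by ring
        _ = π ^ (3 * t) * x i + (π ^ t - π ^ (2 * t)) * y i
            + (π ^ (4 * t) - π ^ (3 * t)) * ∑ l, x l := by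
            congr 1
            · congr 1
              · simp [ite_mul]
              · rw [← Finset.mul_sum, ← hyi i]
            · rw [← Finset.mul_sum]
    have hdvd1 : π ^ k ∣ A.mulVec y i := by
      have hAyi : A.mulVec y i = ∑ j, A i j * y j := by
        simp [Matrix.mulVec, dotProduct]
      rw [hAyi]
      exact Finset.dvd_sum fun j _ => (hx j).mul_left _
    have hdvd2 : π ^ k ∣ (π ^ t - π ^ (2 * t)) * y i := (hx i).mul_left _
    have hdvd : π ^ k ∣ π ^ (3 * t) * (x i + (π ^ t - 1) * ∑ j, x j) := by
      have heq : π ^ (3 * t) * (x i + (π ^ t - 1) * ∑ j, x j)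
          = A.mulVec y i - (π ^ t - π ^ (2 * t)) * y i := by
        rw [hexp2]
        ring
      rw [heq]
      exact dvd_sub hdvd1 hdvd2
    obtain ⟨c, hc⟩ := hdvd
    refine ⟨c, mul_left_cancel₀ (pow_ne_zero (3 * t) hπ0) ?_⟩
    have hsplitpow : π ^ k = π ^ (3 * t) * π ^ (k - 3 * t) := by
      rw [← pow_add]
      congr 1
      omega
    rw [hc, hsplitpow, mul_assoc]
  -- column sums
  have hcol : ∀ x : LGr F V 2 → ℤ_[p], ∑ i, A.mulVec x i = π ^ (4 * t) * ∑ j, x j := by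
    intro x
    calc ∑ i, A.mulVec x i = ∑ i, ∑ j, A i j * x j := by
          refine Finset.sum_congr rfl fun i _ => ?_
          simp [Matrix.mulVec, dotProduct]
      _ = ∑ j, ∑ i, A i j * x j := Finset.sum_comm
      _ = ∑ j, π ^ (4 * t) * x j := by
          refine Finset.sum_congr rfl fun j _ => ?_
          rw [← Finset.sum_mul]
          congr 1
          rw [Finset.sum_congr rfl fun i _ => hsym i j, hrow j]
      _ = π ^ (4 * t) * ∑ j, x j := by rw [← Finset.mul_sum]
  have hK1 : ∀ x : LGr F V 2 → ℤ_[p], (∀ i, π ^ (4 * t) ∣ A.mulVec x i) →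
      ∀ i, π ∣ (x i - ∑ j, x j) := by
    intro x hx i
    have h1 := hker (4 * t) (by omega) x hx i
    rw [show 4 * t - 3 * t = t by omega] at h1
    have hπt : π ∣ π ^ t := dvd_pow_self π (by omega)
    have h2 : π ∣ x i + (π ^ t - 1) * ∑ j, x j := hπt.trans h1
    have h3 : π ∣ π ^ t * ∑ j, x j := hπt.mul_right _
    have hre : x i - ∑ j, x j = (x i + (π ^ t - 1) * ∑ j, x j) - π ^ t * ∑ j, x j := by
      ring
    rw [hre]
    exact dvd_sub h2 h3
  have hK2 : ∀ x : LGr F V 2 → ℤ_[p], (∀ i, π ^ (4 * t + 1) ∣ A.mulVec x i) →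
      ∀ i, π ∣ x i := by
    intro x hx i
    have h1 := hker (4 * t + 1) (by omega) x hx i
    rw [show 4 * t + 1 - 3 * t = t + 1 by omega] at h1
    have hsum : π ∣ ∑ j, x j := by
      have hd : π ^ (4 * t + 1) ∣ ∑ i, A.mulVec x i := Finset.dvd_sum fun i _ => hx i
      rw [hcol] at hd
      obtain ⟨c, hc⟩ := hd
      refine ⟨c, mul_left_cancel₀ (pow_ne_zero (4 * t) hπ0) ?_⟩
      rw [hc, pow_succ, mul_assoc]
    have h2 : π ∣ x i + (π ^ t - 1) * ∑ j, x j :=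
      (dvd_pow_self π (by omega : t + 1 ≠ 0)).trans h1
    have hre : x i = (x i + (π ^ t - 1) * ∑ j, x j) - (π ^ t - 1) * ∑ j, x j := by ring
    rw [hre]
    exact dvd_sub h2 (hsum.mul_left _)
  -- matrix manipulations
  have hPinv := Matrix.nonsing_inv_mul P hP
  have hQinv := Matrix.nonsing_inv_mul Q hQ
  have hQinv' := Matrix.mul_nonsing_inv Q hQ
  have hAQ : A * Q = P⁻¹ * Matrix.diagonal d := by
    calc A * Q = (P⁻¹ * P) * (A * Q) := by rw [hPinv, one_mul]
      _ = P⁻¹ * (P * A * Q) := by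
          rw [Matrix.mul_assoc, Matrix.mul_assoc]
      _ = P⁻¹ * Matrix.diagonal d := by rw [hPQ]
  have hcolx : ∀ j : LGr F V 2, A.mulVec (fun i => Q i j) = fun i => P⁻¹ i j * d j := by
    intro j
    funext i
    have h1 : A.mulVec (fun i => Q i j) i = (A * Q) i j := by
      simp [Matrix.mulVec, dotProduct, Matrix.mul_apply]
    rw [h1, hAQ, Matrix.mul_diagonal]
  have hone : ∀ j : LGr F V 2, ¬ (∀ i, π ∣ Q i j) := by
    intro j hdvd
    have h1 : π ∣ (Q⁻¹ * Q) j j := by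
      rw [Matrix.mul_apply]
      exact Finset.dvd_sum fun i _ => (hdvd i).mul_left _
    rw [hQinv, Matrix.one_apply_eq] at h1
    exact hπprime.not_unit (isUnit_of_dvd_one h1)
  have hcomb : ∀ (j1 j2 : LGr F V 2) (s1 s2 : ℤ_[p]), j1 ≠ j2 →
      (∀ i, π ∣ (s2 * Q i j1 - s1 * Q i j2)) → π ∣ s1 ∧ π ∣ s2 := by
    intro j1 j2 s1 s2 hne hdvd
    have hw : ∀ l, π ∣ ∑ i, Q⁻¹ l i * (s2 * Q i j1 - s1 * Q i j2) :=
      fun l => Finset.dvd_sum fun i _ => (hdvd i).mul_left _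
    have hval : ∀ l, ∑ i, Q⁻¹ l i * (s2 * Q i j1 - s1 * Q i j2)
        = s2 * (Q⁻¹ * Q) l j1 - s1 * (Q⁻¹ * Q) l j2 := by
      intro l
      rw [Matrix.mul_apply, Matrix.mul_apply, Finset.mul_sum, Finset.mul_sum,
        ← Finset.sum_sub_distrib]
      exact Finset.sum_congr rfl fun i _ => by ring
    constructor
    · have h1 := hw j2
      rw [hval j2, hQinv, Matrix.one_apply_ne (Ne.symm hne), Matrix.one_apply_eq] at h1
      rw [mul_zero, mul_one, zero_sub] at h1
      exact dvd_neg.1 h1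
    · have h1 := hw j1
      rw [hval j1, hQinv, Matrix.one_apply_ne hne, Matrix.one_apply_eq] at h1
      rw [mul_zero, mul_one, sub_zero] at h1
      exact h1
  -- nonemptiness
  haveI hne_inst : Nonempty (LGr F V 2) := by
    let b := Module.finBasis F V
    have h2le : 2 ≤ Module.finrank F V := by omega
    let v : Fin 2 → V := fun i => b (Fin.castLE h2le i)
    have hli : LinearIndependent F v :=
      b.linearIndependent.comp _ (Fin.castLE_injective h2le)
    refine ⟨⟨Submodule.span F (Set.range v), ?_⟩⟩
    rw [finrank_span_eq_card hli]
    simp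
  -- existence of j with π^{4t} ∣ d j
  have hexists : ∃ j, π ^ (4 * t) ∣ d j := by
    set y : LGr F V 2 → ℤ_[p] := Q⁻¹.mulVec (fun _ => 1) with hy
    have hQy : Q.mulVec y = fun _ => 1 := by
      rw [hy, Matrix.mulVec_mulVec, hQinv', Matrix.one_mulVec]
    obtain ⟨j, hj⟩ : ∃ j, ¬ π ∣ y j := by
      by_contra hall
      push_neg at hall
      obtain ⟨i⟩ := hne_inst
      have h1 : π ∣ Q.mulVec y i := by
        have : Q.mulVec y i = ∑ j, Q i j * y j := by
          simp [Matrix.mulVec, dotProduct]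
        rw [this]
        exact Finset.dvd_sum fun j _ => (hall j).mul_left _
      rw [hQy] at h1
      exact hπprime.not_unit (isUnit_of_dvd_one h1)
    have hDy : Matrix.diagonal d *ᵥ y = P *ᵥ (A *ᵥ (fun _ => (1 : ℤ_[p]))) := by
      have h1 : Matrix.diagonal d *ᵥ y = (P * A * Q) *ᵥ y := by rw [hPQ]
      rw [h1, ← Matrix.mulVec_mulVec, ← Matrix.mulVec_mulVec, hQy]
    have hA1 : A *ᵥ (fun _ => (1 : ℤ_[p])) = fun _ => π ^ (4 * t) := by
      funext i
      have : A.mulVec (fun _ => (1 : ℤ_[p])) i = ∑ j, A i j := by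
        simp [Matrix.mulVec, dotProduct]
      rw [this, hrow i]
    have hdj : d j * y j = π ^ (4 * t) * ∑ l, P j l := by
      have h1 : (Matrix.diagonal d *ᵥ y) j = d j * y j := by
        rw [Matrix.mulVec_diagonal]
      have h2 : (P *ᵥ (fun _ => π ^ (4 * t))) j = π ^ (4 * t) * ∑ l, P j l := by
        simp [Matrix.mulVec, dotProduct, Finset.mul_sum, mul_comm]
      rw [← h1, hDy, hA1, h2]
    refine ⟨j, ?_⟩
    have hdvd : π ^ (4 * t) ∣ d j * y j := ⟨∑ l, P j l, hdj⟩
    exact hπprime.pow_dvd_of_dvd_mul_right _ hj hdvd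
  obtain ⟨j0, hj0⟩ := hexists
  -- uniqueness
  have huniq : ∀ j, π ^ (4 * t) ∣ d j → j = j0 := by
    intro j hj
    by_contra hne
    have hxd1 : ∀ i, π ^ (4 * t) ∣ A.mulVec (fun i => Q i j) i := by
      intro i
      rw [hcolx j]
      exact hj.mul_left _
    have hxd2 : ∀ i, π ^ (4 * t) ∣ A.mulVec (fun i => Q i j0) i := by
      intro i
      rw [hcolx j0]
      exact hj0.mul_left _
    have hs1 := hK1 _ hxd1
    have hs2 := hK1 _ hxd2
    set s1 := ∑ i, Q i j with hs1def
    set s2 := ∑ i, Q i j0 with hs2def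
    have hzd : ∀ i, π ∣ (s2 * Q i j - s1 * Q i j0) := by
      intro i
      have hre : s2 * Q i j - s1 * Q i j0
          = s2 * (Q i j - s1) - s1 * (Q i j0 - s2) := by ring
      rw [hre]
      exact dvd_sub ((hs1 i).mul_left _) ((hs2 i).mul_left _)
    obtain ⟨hd1, hd2⟩ := hcomb j j0 s1 s2 hne hzd
    apply hone j
    intro i
    have hre : Q i j = (Q i j - s1) + s1 := by ring
    rw [hre]
    exact dvd_add (hs1 i) hd1
  -- exactness of the valuation at j0
  have hnot : ¬ π ^ (4 * t + 1) ∣ d j0 := by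
    intro hdvd
    have hxd : ∀ i, π ^ (4 * t + 1) ∣ A.mulVec (fun i => Q i j0) i := by
      intro i
      rw [hcolx j0]
      exact hdvd.mul_left _
    exact hone j0 (hK2 _ hxd)
  have hassoc : Associated (π ^ (4 * t)) (d j0) := by
    obtain ⟨c, hc⟩ := hj0
    have hcu : IsUnit c := by
      rw [PadicInt.isUnit_iff]
      refine le_antisymm (PadicInt.norm_le_one c) ?_
      by_contra hlt
      push_neg at hlt
      have hpc : (p : ℤ_[p]) ∣ c := (PadicInt.norm_lt_one_iff_dvd c).1 hlt
      obtain ⟨e, he⟩ := hpc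
      apply hnot
      rw [hc, he, pow_succ]
      exact ⟨e, by ring⟩
    obtain ⟨u, hu⟩ := hcu
    exact ⟨u, by rw [hu, ← hc]⟩
  rw [Nat.card_eq_one_iff_exists]
  refine ⟨⟨j0, hassoc⟩, ?_⟩
  rintro ⟨j, hjassoc⟩
  exact Subtype.ext (huniq j hjassoc.dvd)
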